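/- For every real a > -1, the function g_a(x) = (1 + a/x)^(a+x) is decreasing on [1, ∞). -/

import Mathlib

open Real Set

lemma ga_hasDerivAt (a : ℝ) (ha : -1 < a) {x : ℝ} (hx : 1 ≤ x) :
    HasDerivAt (fun y : ℝ => (a + y) * Real.log (1 + a / y))
      (Real.log (1 + a / x) + (a + x) * (-(a / x ^ 2) / (1 + a / x))) x := by
  have hx0 : (0:ℝ) < x := lt_of_lt_of_le one_pos hx
  have hxa : 0 < x + a := by linarith
  have hb : 0 < 1 + a / x := by
    have : 1 + a / x = (x + a) / x := by field_simp
    rw [this]; positivity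
  have d1 : HasDerivAt (fun y : ℝ => 1 + a / y) (-(a / x ^ 2)) x := by
    simp only [div_eq_mul_inv]
    have h := ((hasDerivAt_inv hx0.ne').const_mul a).const_add 1
    refine h.congr_deriv ?_
    ring
  have d2 : HasDerivAt (fun y : ℝ => Real.log (1 + a / y))
      (-(a / x ^ 2) / (1 + a / x)) x := d1.log hb.ne'
  have d3 : HasDerivAt (fun y : ℝ => a + y) 1 x := (hasDerivAt_id x).const_add a
  have := d3.mul d2
  exact this.congr_deriv (by ring)

/-- For every real `a > -1`, the function `g_a(x) = (1 + a/x)^(a+x)` is decreasing on `[1, ∞)`. -/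
theorem ga_antitoneOn (a : ℝ) (ha : -1 < a) :
    AntitoneOn (fun x : ℝ => (1 + a / x) ^ (a + x)) (Set.Ici (1 : ℝ)) := by
  set h : ℝ → ℝ := fun y => (a + y) * Real.log (1 + a / y) with hh
  have hanti : AntitoneOn h (Set.Ici (1:ℝ)) := by
    apply antitoneOn_of_deriv_nonpos (convex_Ici 1)
    · intro x hx
      exact (ga_hasDerivAt a ha hx).continuousAt.continuousWithinAt
    · intro x hx
      rw [interior_Ici] at hx
      exact (ga_hasDerivAt a ha hx.le).differentiableAt.differentiableWithinAt
    · intro x hx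
      rw [interior_Ici] at hx
      have hx1 : 1 < x := hx
      have hx0 : (0:ℝ) < x := lt_trans one_pos hx1
      have hxa : 0 < x + a := by linarith
      have hb : 0 < 1 + a / x := by
        have : 1 + a / x = (x + a) / x := by field_simp
        rw [this]; positivity
      rw [(ga_hasDerivAt a ha hx.le).deriv]
      have h1 : Real.log (1 + a / x) ≤ a / x := by
        have := Real.log_le_sub_one_of_pos hb
        linarith
      have h2 : (a + x) * (-(a / x ^ 2) / (1 + a / x)) = -(a / x) := by
        field_simp
        ring
      rw [h2]; linarith
  intro x hx y hy hxy
  have hbx : 0 < 1 + a / x := by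
    have hx0 : (0:ℝ) < x := lt_of_lt_of_le one_pos hx
    have : 1 + a / x = (x + a) / x := by field_simp
    rw [this]
    have : 0 < x + a := by
      have := mem_Ici.mp hx; linarith
    positivity
  have hby : 0 < 1 + a / y := by
    have hy0 : (0:ℝ) < y := lt_of_lt_of_le one_pos hy
    have : 1 + a / y = (y + a) / y := by field_simp
    rw [this]
    have : 0 < y + a := by
      have := mem_Ici.mp hy; linarith
    positivity
  simp only
  rw [Real.rpow_def_of_pos hbx, Real.rpow_def_of_pos hby]
  apply Real.exp_le_exp.mpr
  have := hanti hx hy hxy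
  simp only [hh] at this
  nlinarith [this]
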